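/- Every constructible right ideal of the monoid T equals ∅, or tT for some t ∈ T, or ⋃_{n ∈ ℤ} t·x_n·T ∪ ⋃_{n ∈ ℤ} t·y_n·T for some t ∈ T; conversely all sets of these forms are constructible right ideals of T. -/

import Mathlib

/-- The alphabet of the monoid `T`: letters `a`, `b`, `c` and `x n`, `y n` for `n : ℤ`. -/
inductive TGen : Type
  | a : TGen
  | b : TGen
  | c : TGen
  | x : ℤ → TGen
  | y : ℤ → TGen
  deriving DecidableEq

/-- The defining relations of `T`: `a·b·x n = b·x n`, `a·b·y n = b·y (n+1)`,
`c·b·x n = b·x (n+1)` and `c·b·y n = b·y n` for `n ∈ ℤ`. -/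
inductive TRel : FreeMonoid TGen → FreeMonoid TGen → Prop
  | axr (n : ℤ) : TRel (.of .a * .of .b * .of (.x n)) (.of .b * .of (.x n))
  | ayr (n : ℤ) : TRel (.of .a * .of .b * .of (.y n)) (.of .b * .of (.y (n + 1)))
  | cxr (n : ℤ) : TRel (.of .c * .of .b * .of (.x n)) (.of .b * .of (.x (n + 1)))
  | cyr (n : ℤ) : TRel (.of .c * .of .b * .of (.y n)) (.of .b * .of (.y n))

/-- The monoid `T` presented by the generators `TGen` and the relations `TRel`. -/
abbrev T : Type := PresentedMonoid TRel

/-- The images of the generators in `T`. -/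
def gen (g : TGen) : T := PresentedMonoid.of TRel g

/-- The principal right ideal `sM` of a monoid. -/
def rIdeal {M : Type*} [Monoid M] (s : M) : Set M := {m | ∃ u, m = s * u}

/-- The constructible right ideals of a monoid `M`: the smallest family of subsets of `M`
containing `M` itself and closed under the operations `X ↦ tX` and `X ↦ t⁻¹X = {m | t·m ∈ X}`
for every `t ∈ M`. -/
inductive IsConstructible (M : Type*) [Monoid M] : Set M → Prop
  | univ : IsConstructible M Set.univ
  | mul (t : M) {X : Set M} : IsConstructible M X → IsConstructible M ((t * ·) '' X)
  | preimage (t : M) {X : Set M} : IsConstructible M X → IsConstructible M {m | t * m ∈ X}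

namespace TProof

open TGen

/-- multiply a letter on the left of a (normal) word -/
def ml (g : TGen) (v : List TGen) : List TGen :=
  match g with
  | .a => match v with
          | .b :: .x k :: r => .b :: .x k :: r
          | .b :: .y k :: r => .b :: .y (k+1) :: r
          | _ => .a :: v
  | .c => match v with
          | .b :: .x k :: r => .b :: .x (k+1) :: r
          | .b :: .y k :: r => .b :: .y k :: r
          | _ => .c :: v
  | g => g :: v

@[simp] lemma ml_b (v : List TGen) : ml .b v = .b :: v := rfl
@[simp] lemma ml_x (n : ℤ) (v : List TGen) : ml (.x n) v = .x n :: v := rfl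
@[simp] lemma ml_y (n : ℤ) (v : List TGen) : ml (.y n) v = .y n :: v := rfl
@[simp] lemma ml_a_bx (k : ℤ) (r : List TGen) : ml .a (.b :: .x k :: r) = .b :: .x k :: r := rfl
@[simp] lemma ml_a_by (k : ℤ) (r : List TGen) : ml .a (.b :: .y k :: r) = .b :: .y (k+1) :: r := rfl
@[simp] lemma ml_c_bx (k : ℤ) (r : List TGen) : ml .c (.b :: .x k :: r) = .b :: .x (k+1) :: r := rfl
@[simp] lemma ml_c_by (k : ℤ) (r : List TGen) : ml .c (.b :: .y k :: r) = .b :: .y k :: r := rfl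

/-- trichotomy for the shape of a word wrt absorption -/
lemma trich (v : List TGen) : (∃ k r, v = .b :: .x k :: r) ∨ (∃ k r, v = .b :: .y k :: r) ∨
    (ml .a v = .a :: v ∧ ml .c v = .c :: v) := by
  match v with
  | .b :: .x k :: r => exact Or.inl ⟨k, r, rfl⟩
  | .b :: .y k :: r => exact Or.inr (Or.inl ⟨k, r, rfl⟩)
  | [] => exact Or.inr (Or.inr ⟨rfl, rfl⟩)
  | [.a] | [.b] | [.c] | [.x n] | [.y n] => exact Or.inr (Or.inr ⟨rfl, rfl⟩)
  | .a :: t :: r | .c :: t :: r | .x n :: t :: r | .y n :: t :: r =>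
      exact Or.inr (Or.inr ⟨rfl, rfl⟩)
  | .b :: .a :: r | .b :: .b :: r | .b :: .c :: r => exact Or.inr (Or.inr ⟨rfl, rfl⟩)

lemma ml_shape (g : TGen) (v : List TGen) :
    ml g v = g :: v ∨ ∃ z r, v = TGen.b :: z :: r ∧ ∃ z', ml g v = TGen.b :: z' :: r := by
  rcases trich v with ⟨k, r, rfl⟩ | ⟨k, r, rfl⟩ | ⟨h1, h2⟩
  · cases g <;> first
      | exact Or.inl rfl
      | exact Or.inr ⟨_, r, rfl, _, rfl⟩
  · cases g <;> first
      | exact Or.inl rfl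
      | exact Or.inr ⟨_, r, rfl, _, rfl⟩
  · cases g <;> first
      | exact Or.inl rfl
      | exact Or.inl h1
      | exact Or.inl h2

lemma ml_length_le (g : TGen) (v : List TGen) : (ml g v).length ≤ v.length + 1 := by
  rcases ml_shape g v with h | ⟨z, r, rfl, z', h⟩ <;> simp [h]

lemma ml_length (g : TGen) (v : List TGen) : v.length ≤ (ml g v).length := by
  rcases ml_shape g v with h | ⟨z, r, rfl, z', h⟩ <;> simp [h]

lemma ml_ne_nil (g : TGen) (v : List TGen) : ml g v ≠ [] := by
  rcases ml_shape g v with h | ⟨z, r, rfl, z', h⟩ <;> simp [h]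

/-- the normal form function -/
def nf (v : List TGen) : List TGen := v.foldr ml []

@[simp] lemma nf_nil : nf [] = [] := rfl
@[simp] lemma nf_cons (g : TGen) (v : List TGen) : nf (g :: v) = ml g (nf v) := rfl

lemma nf_append (u v : List TGen) : nf (u ++ v) = u.foldr ml (nf v) := List.foldr_append ..

lemma nf_length (v : List TGen) : (nf v).length ≤ v.length := by
  induction v with
  | nil => simp
  | cons g v ih =>
      calc (ml g (nf v)).length ≤ (nf v).length + 1 := ml_length_le ..
        _ ≤ v.length + 1 := by omega

/-- key: if `g :: v` is normal then `v` is normal and `ml g v` just prepends. -/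
lemma norm_cons {g : TGen} {v : List TGen} (h : nf (g :: v) = g :: v) :
    nf v = v ∧ ml g v = g :: v := by
  have h' : ml g (nf v) = g :: v := h
  rcases ml_shape g (nf v) with h2 | ⟨z, r, hr, z', h2⟩
  · rw [h2] at h'
    have : nf v = v := by injection h'
    refine ⟨this, ?_⟩
    rw [← this]
    rw [h2, this]
  · exfalso
    rw [h2] at h'
    have l1 : (nf v).length ≤ v.length := nf_length v
    have l2 : (TGen.b :: z' :: r).length = (g :: v).length := by rw [h']
    have l3 : (nf v).length = (TGen.b :: z' :: r).length := by rw [hr]; rfl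
    simp at l2 l3
    omega

/-- the word map into `T` -/
def mkw (l : List TGen) : T := PresentedMonoid.mk TRel (FreeMonoid.ofList l)

lemma mkw_append (u v : List TGen) : mkw (u ++ v) = mkw u * mkw v := by
  unfold mkw
  rw [FreeMonoid.ofList_append, map_mul]

lemma mkw_cons (g : TGen) (v : List TGen) : mkw (g :: v) = gen g * mkw v := by
  have : g :: v = [g] ++ v := rfl
  rw [this, mkw_append]; rfl

@[simp] lemma mkw_nil : mkw [] = 1 := rfl

lemma mkw_sound {l r : FreeMonoid TGen} (h : TRel l r) :
    PresentedMonoid.mk TRel l = PresentedMonoid.mk TRel r :=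
  Quotient.sound (ConGen.Rel.of _ _ h)

lemma mkw_ml (g : TGen) (v : List TGen) : mkw (ml g v) = mkw (g :: v) := by
  rcases trich v with ⟨k, r, rfl⟩ | ⟨k, r, rfl⟩ | ⟨h1, h2⟩
  · cases g <;> simp only [ml] <;> try rfl
    · -- a · b x k
      show mkw (TGen.b :: TGen.x k :: r) = mkw (TGen.a :: TGen.b :: TGen.x k :: r)
      have e1 : mkw (TGen.a :: TGen.b :: TGen.x k :: r)
          = PresentedMonoid.mk TRel (.of .a * .of .b * .of (.x k)) * mkw r := by
        simp [mkw_cons, gen, PresentedMonoid.of, map_mul, mul_assoc]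
      have e2 : mkw (TGen.b :: TGen.x k :: r)
          = PresentedMonoid.mk TRel (.of .b * .of (.x k)) * mkw r := by
        simp [mkw_cons, gen, PresentedMonoid.of, map_mul, mul_assoc]
      rw [e1, e2, mkw_sound (TRel.axr k)]
    · show mkw (TGen.b :: TGen.x (k+1) :: r) = mkw (TGen.c :: TGen.b :: TGen.x k :: r)
      have e1 : mkw (TGen.c :: TGen.b :: TGen.x k :: r)
          = PresentedMonoid.mk TRel (.of .c * .of .b * .of (.x k)) * mkw r := by
        simp [mkw_cons, gen, PresentedMonoid.of, map_mul, mul_assoc]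
      have e2 : mkw (TGen.b :: TGen.x (k+1) :: r)
          = PresentedMonoid.mk TRel (.of .b * .of (.x (k+1))) * mkw r := by
        simp [mkw_cons, gen, PresentedMonoid.of, map_mul, mul_assoc]
      rw [e1, e2, mkw_sound (TRel.cxr k)]
  · cases g <;> simp only [ml] <;> try rfl
    · show mkw (TGen.b :: TGen.y (k+1) :: r) = mkw (TGen.a :: TGen.b :: TGen.y k :: r)
      have e1 : mkw (TGen.a :: TGen.b :: TGen.y k :: r)
          = PresentedMonoid.mk TRel (.of .a * .of .b * .of (.y k)) * mkw r := by
        simp [mkw_cons, gen, PresentedMonoid.of, map_mul, mul_assoc]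
      have e2 : mkw (TGen.b :: TGen.y (k+1) :: r)
          = PresentedMonoid.mk TRel (.of .b * .of (.y (k+1))) * mkw r := by
        simp [mkw_cons, gen, PresentedMonoid.of, map_mul, mul_assoc]
      rw [e1, e2, mkw_sound (TRel.ayr k)]
    · show mkw (TGen.b :: TGen.y k :: r) = mkw (TGen.c :: TGen.b :: TGen.y k :: r)
      have e1 : mkw (TGen.c :: TGen.b :: TGen.y k :: r)
          = PresentedMonoid.mk TRel (.of .c * .of .b * .of (.y k)) * mkw r := by
        simp [mkw_cons, gen, PresentedMonoid.of, map_mul, mul_assoc]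
      have e2 : mkw (TGen.b :: TGen.y k :: r)
          = PresentedMonoid.mk TRel (.of .b * .of (.y k)) * mkw r := by
        simp [mkw_cons, gen, PresentedMonoid.of, map_mul, mul_assoc]
      rw [e1, e2, mkw_sound (TRel.cyr k)]
  · cases g
    case a => rw [h1]
    case c => rw [h2]
    all_goals rfl

lemma mkw_nf (v : List TGen) : mkw (nf v) = mkw v := by
  induction v with
  | nil => rfl
  | cons g v ih => rw [nf_cons, mkw_ml, mkw_cons, mkw_cons, ih]

/-- action of words on words by left multiplication, as an endomorphism monoid hom -/
def psi : T →* Function.End (List TGen) :=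
  PresentedMonoid.lift (M := Function.End (List TGen)) (fun g => ml g) (h := by
    intro l r h
    cases h with
    | axr n => funext w; show ml .a (ml .b (ml (.x n) w)) = ml .b (ml (.x n) w); rfl
    | ayr n => funext w; show ml .a (ml .b (ml (.y n) w)) = ml .b (ml (.y (n+1)) w); rfl
    | cxr n => funext w; show ml .c (ml .b (ml (.x n) w)) = ml .b (ml (.x (n+1)) w); rfl
    | cyr n => funext w; show ml .c (ml .b (ml (.y n) w)) = ml .b (ml (.y n) w); rfl)

lemma psi_mkw (v : List TGen) (e : List TGen) : psi (mkw v) e = v.foldr ml e := by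
  induction v with
  | nil => rw [mkw_nil, map_one]; rfl
  | cons g v ih =>
      rw [mkw_cons, map_mul]
      show psi (gen g) (psi (mkw v) e) = _
      rw [ih]
      rfl

lemma mkw_inj {u v : List TGen} (h : mkw u = mkw v) : nf u = nf v := by
  have := congrArg (fun t => psi t []) h
  have h2 : List.foldr ml [] u = List.foldr ml [] v := by simpa [psi_mkw] using this
  exact h2

lemma mkw_eq_iff {u v : List TGen} : mkw u = mkw v ↔ nf u = nf v :=
  ⟨mkw_inj, fun h => by rw [← mkw_nf u, ← mkw_nf v, h]⟩

lemma nf_idem (v : List TGen) : nf (nf v) = nf v := mkw_inj (mkw_nf v)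

lemma mkw_surj (m : T) : ∃ v, nf v = v ∧ m = mkw v := by
  refine PresentedMonoid.inductionOn m fun f => ⟨nf f.toList, nf_idem _, (mkw_nf _).symm⟩

lemma gen_mkw (g : TGen) : gen g = mkw [g] := rfl

lemma gen_mul_mkw (g : TGen) (v : List TGen) : gen g * mkw v = mkw (ml g v) := by
  rw [mkw_ml, mkw_cons]

/-- the two relevant base predicates: `true` picks out words starting with an `x` or `y` letter -/
def PP : Bool → List TGen → Prop
  | false, _ => True
  | true, v => (∃ n r, v = .x n :: r) ∨ (∃ n r, v = .y n :: r)

@[simp] lemma PP_false (v : List TGen) : PP false v ↔ True := Iff.rfl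
lemma PP_true (v : List TGen) : PP true v ↔ (∃ n r, v = .x n :: r) ∨ (∃ n r, v = .y n :: r) :=
  Iff.rfl

/-- one step of the divisibility predicate transformer -/
def step : TGen → (List TGen → Prop) → List TGen → Prop
  | .a, P, v => (∃ k r, v = .b :: .x k :: r ∧ P (.b :: .x k :: r)) ∨
                (∃ k r, v = .b :: .y k :: r ∧ P (.b :: .y (k-1) :: r)) ∨
                (∃ v', v = .a :: v' ∧ P v')
  | .c, P, v => (∃ k r, v = .b :: .x k :: r ∧ P (.b :: .x (k-1) :: r)) ∨
                (∃ k r, v = .b :: .y k :: r ∧ P (.b :: .y k :: r)) ∨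
                (∃ v', v = .c :: v' ∧ P v')
  | .b, P, v => ∃ v', v = .b :: v' ∧ P v'
  | .x n, P, v => ∃ v', v = .x n :: v' ∧ P v'
  | .y n, P, v => ∃ v', v = .y n :: v' ∧ P v'

/-- the divisibility predicate: `Dp w P v` iff `v = nf (w ++ V)` for some normal `V` with `P V` -/
def Dp (w : List TGen) (P : List TGen → Prop) : List TGen → Prop := w.foldr step P

@[simp] lemma Dp_nil (P : List TGen → Prop) : Dp [] P = P := rfl
@[simp] lemma Dp_cons (g : TGen) (w : List TGen) (P : List TGen → Prop) :
    Dp (g :: w) P = step g (Dp w P) := rfl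

lemma not_bxy_of_ml_a {v : List TGen} (h : ml .a v = .a :: v) :
    (∀ k r, v ≠ .b :: .x k :: r) ∧ (∀ k r, v ≠ .b :: .y k :: r) := by
  constructor <;> (rintro k r rfl; simp [ml] at h)

@[simp] lemma exists_pair_eq_left {α β : Sort*} {k : α} {r : β} {Q : α → β → Prop} :
    (∃ k' r', (k = k' ∧ r = r') ∧ Q k' r') ↔ Q k r := by
  constructor
  · rintro ⟨_, _, ⟨rfl, rfl⟩, h⟩; exact h
  · exact fun h => ⟨k, r, ⟨rfl, rfl⟩, h⟩

@[simp] lemma exists_eq_left_and {β : Sort*} {c : Prop} {r : β} {Q : β → Prop} :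
    (∃ v', (c ∧ r = v') ∧ Q v') ↔ c ∧ Q r := by
  constructor
  · rintro ⟨_, ⟨hc, rfl⟩, h⟩; exact ⟨hc, h⟩
  · exact fun ⟨hc, h⟩ => ⟨r, ⟨hc, rfl⟩, h⟩

/-- the classification of the `b`-slices of a divisibility predicate -/
theorem slice (w : List TGen) (p : Bool) :
    (∀ k r, Dp w (PP p) (.b :: .x k :: r) ∧ Dp w (PP p) (.b :: .y k :: r)) ∨
    ((∀ k r, ¬ Dp w (PP p) (.b :: .x k :: r)) ∧ (∀ k r, ¬ Dp w (PP p) (.b :: .y k :: r))) ∨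
    (∃ j w', (∀ k r, Dp w (PP p) (.b :: .x k :: r) ↔ (k = j ∧ Dp w' (PP p) r)) ∧
      (∀ k r, ¬ Dp w (PP p) (.b :: .y k :: r))) ∨
    (∃ j w', (∀ k r, ¬ Dp w (PP p) (.b :: .x k :: r)) ∧
      (∀ k r, Dp w (PP p) (.b :: .y k :: r) ↔ (k = j ∧ Dp w' (PP p) r))) := by
  induction w with
  | nil =>
      cases p
      · exact Or.inl fun k r => ⟨trivial, trivial⟩
      · exact Or.inr (Or.inl ⟨fun k r h => by simp [PP_true] at h,
          fun k r h => by simp [PP_true] at h⟩)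
  | cons g w ih =>
      cases g with
      | a =>
          have ex : ∀ k r, Dp (.a :: w) (PP p) (.b :: .x k :: r) ↔ Dp w (PP p) (.b :: .x k :: r) := by
            intro k r; simp [step]
          have ey : ∀ k r, Dp (.a :: w) (PP p) (.b :: .y k :: r) ↔
              Dp w (PP p) (.b :: .y (k-1) :: r) := by
            intro k r; simp [step]
          rcases ih with h | ⟨hx, hy⟩ | ⟨j, w', hx, hy⟩ | ⟨j, w', hx, hy⟩
          · exact Or.inl fun k r => ⟨(ex k r).2 (h k r).1, (ey k r).2 (h (k-1) r).2⟩
          · exact Or.inr (Or.inl ⟨fun k r h' => hx k r ((ex k r).1 h'),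
              fun k r h' => hy (k-1) r ((ey k r).1 h')⟩)
          · refine Or.inr (Or.inr (Or.inl ⟨j, w', fun k r => (ex k r).trans (hx k r),
              fun k r h' => hy (k-1) r ((ey k r).1 h')⟩))
          · refine Or.inr (Or.inr (Or.inr ⟨j+1, w', fun k r h' => hx k r ((ex k r).1 h'), ?_⟩))
            intro k r
            rw [ey k r, hy (k-1) r]
            constructor
            · rintro ⟨rfl, h⟩; exact ⟨by omega, h⟩
            · rintro ⟨rfl, h⟩; exact ⟨by omega, h⟩
      | c =>
          have ex : ∀ k r, Dp (.c :: w) (PP p) (.b :: .x k :: r) ↔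
              Dp w (PP p) (.b :: .x (k-1) :: r) := by
            intro k r; simp [step]
          have ey : ∀ k r, Dp (.c :: w) (PP p) (.b :: .y k :: r) ↔
              Dp w (PP p) (.b :: .y k :: r) := by
            intro k r; simp [step]
          rcases ih with h | ⟨hx, hy⟩ | ⟨j, w', hx, hy⟩ | ⟨j, w', hx, hy⟩
          · exact Or.inl fun k r => ⟨(ex k r).2 (h (k-1) r).1, (ey k r).2 (h k r).2⟩
          · exact Or.inr (Or.inl ⟨fun k r h' => hx (k-1) r ((ex k r).1 h'),
              fun k r h' => hy k r ((ey k r).1 h')⟩)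
          · refine Or.inr (Or.inr (Or.inl ⟨j+1, w', ?_, fun k r h' => hy k r ((ey k r).1 h')⟩))
            intro k r
            rw [ex k r, hx (k-1) r]
            constructor
            · rintro ⟨rfl, h⟩; exact ⟨by omega, h⟩
            · rintro ⟨rfl, h⟩; exact ⟨by omega, h⟩
          · exact Or.inr (Or.inr (Or.inr ⟨j, w', fun k r h' => hx (k-1) r ((ex k r).1 h'),
              fun k r => (ey k r).trans (hy k r)⟩))
      | b =>
          have ex : ∀ (z : TGen) r, Dp (.b :: w) (PP p) (.b :: z :: r) ↔ Dp w (PP p) (z :: r) := by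
            intro z r; simp [step]
          cases w with
          | nil =>
              cases p
              · exact Or.inl fun k r => ⟨(ex _ r).2 trivial, (ex _ r).2 trivial⟩
              · refine Or.inl fun k r => ⟨(ex _ r).2 ?_, (ex _ r).2 ?_⟩
                · exact Or.inl ⟨k, r, rfl⟩
                · exact Or.inr ⟨k, r, rfl⟩
          | cons h w' =>
              cases h with
              | a =>
                  refine Or.inr (Or.inl ⟨fun k r h' => ?_, fun k r h' => ?_⟩) <;>
                    · have := (ex _ r).1 h'
                      simp [step] at this
              | b =>
                  refine Or.inr (Or.inl ⟨fun k r h' => ?_, fun k r h' => ?_⟩) <;>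
                    · have := (ex _ r).1 h'
                      simp [step] at this
              | c =>
                  refine Or.inr (Or.inl ⟨fun k r h' => ?_, fun k r h' => ?_⟩) <;>
                    · have := (ex _ r).1 h'
                      simp [step] at this
              | x j =>
                  refine Or.inr (Or.inr (Or.inl ⟨j, w', fun k r => ?_, fun k r h' => ?_⟩))
                  · rw [ex _ r]
                    simp [step, eq_comm]
                  · have := (ex _ r).1 h'
                    simp [step] at this
              | y j =>
                  refine Or.inr (Or.inr (Or.inr ⟨j, w', fun k r h' => ?_, fun k r => ?_⟩))
                  · have := (ex _ r).1 h'
                    simp [step] at this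
                  · rw [ex _ r]
                    simp [step, eq_comm]
      | x m =>
          refine Or.inr (Or.inl ⟨fun k r h' => ?_, fun k r h' => ?_⟩) <;> simp [step] at h'
      | y m =>
          refine Or.inr (Or.inl ⟨fun k r h' => ?_, fun k r h' => ?_⟩) <;> simp [step] at h'

lemma not_Dp_bPU_of_ml_a {v : List TGen} (h1 : ml .a v = .a :: v) :
    ¬ Dp [.b] (PP true) v := by
  rintro ⟨v', rfl, hp⟩
  rcases hp with ⟨n, r, rfl⟩ | ⟨n, r, rfl⟩
  · exact (not_bxy_of_ml_a h1).1 n r rfl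
  · exact (not_bxy_of_ml_a h1).2 n r rfl

lemma Dp_bPU_bx (k : ℤ) (r : List TGen) : Dp [.b] (PP true) (.b :: .x k :: r) :=
  ⟨_, rfl, Or.inl ⟨k, r, rfl⟩⟩

lemma Dp_bPU_by (k : ℤ) (r : List TGen) : Dp [.b] (PP true) (.b :: .y k :: r) :=
  ⟨_, rfl, Or.inr ⟨k, r, rfl⟩⟩

/-- computation of the answer for the preimage of a divisibility set under the letter `a`,
when the word `w` does not start with `a` (so that non-absorbed words are excluded) -/
theorem master_a_aux (w : List TGen) (p : Bool) (hw : ∀ v, ¬ Dp w (PP p) (.a :: v)) :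
    (∀ v, ¬ Dp w (PP p) (ml .a v)) ∨
      ∃ w' p', ∀ v, Dp w (PP p) (ml .a v) ↔ Dp w' (PP p') v := by
  rcases slice w p with hα | ⟨hx, hy⟩ | ⟨j, w', hx, hy⟩ | ⟨j, w', hx, hy⟩
  · refine Or.inr ⟨[.b], true, fun v => ?_⟩
    rcases trich v with ⟨k, r, rfl⟩ | ⟨k, r, rfl⟩ | ⟨h1, h2⟩
    · rw [ml_a_bx]
      exact iff_of_true (hα k r).1 (Dp_bPU_bx k r)
    · rw [ml_a_by]
      exact iff_of_true (hα (k+1) r).2 (Dp_bPU_by k r)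
    · rw [h1]
      exact iff_of_false (hw v) (not_Dp_bPU_of_ml_a h1)
  · refine Or.inl fun v => ?_
    rcases trich v with ⟨k, r, rfl⟩ | ⟨k, r, rfl⟩ | ⟨h1, h2⟩
    · rw [ml_a_bx]; exact hx k r
    · rw [ml_a_by]; exact hy (k+1) r
    · rw [h1]; exact hw v
  · refine Or.inr ⟨.b :: .x j :: w', p, fun v => ?_⟩
    have eval : ∀ u, Dp (.b :: .x j :: w') (PP p) u ↔ ∃ r, u = .b :: .x j :: r ∧ Dp w' (PP p) r := by
      intro u
      constructor
      · rintro ⟨v', rfl, v2, rfl, h⟩; exact ⟨v2, rfl, h⟩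
      · rintro ⟨r, rfl, h⟩; exact ⟨_, rfl, r, rfl, h⟩
    rcases trich v with ⟨k, r, rfl⟩ | ⟨k, r, rfl⟩ | ⟨h1, h2⟩
    · rw [ml_a_bx, hx k r, eval]
      constructor
      · rintro ⟨rfl, h⟩; exact ⟨r, rfl, h⟩
      · rintro ⟨r', heq, h⟩
        obtain ⟨h1, h2⟩ : TGen.x k = TGen.x j ∧ r = r' := by
          have := heq; simp at this; tauto
        cases h1; exact ⟨rfl, h2 ▸ h⟩
    · rw [ml_a_by, eval]
      refine iff_of_false (hy (k+1) r) ?_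
      rintro ⟨r', heq, -⟩; simp at heq
    · rw [h1, eval]
      refine iff_of_false (hw v) ?_
      rintro ⟨r', rfl, -⟩
      exact (not_bxy_of_ml_a h1).1 j r' rfl
  · refine Or.inr ⟨.b :: .y (j-1) :: w', p, fun v => ?_⟩
    have eval : ∀ u, Dp (.b :: .y (j-1) :: w') (PP p) u ↔
        ∃ r, u = .b :: .y (j-1) :: r ∧ Dp w' (PP p) r := by
      intro u
      constructor
      · rintro ⟨v', rfl, v2, rfl, h⟩; exact ⟨v2, rfl, h⟩
      · rintro ⟨r, rfl, h⟩; exact ⟨_, rfl, r, rfl, h⟩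
    rcases trich v with ⟨k, r, rfl⟩ | ⟨k, r, rfl⟩ | ⟨h1, h2⟩
    · rw [ml_a_bx, eval]
      refine iff_of_false (hx k r) ?_
      rintro ⟨r', heq, -⟩; simp at heq
    · rw [ml_a_by, hy (k+1) r, eval]
      constructor
      · rintro ⟨h, hD⟩; exact ⟨r, by rw [show k = j - 1 by omega], hD⟩
      · rintro ⟨r', heq, h⟩
        obtain ⟨h1, h2⟩ : k = j - 1 ∧ r = r' := by
          simp at heq; tauto
        exact ⟨by omega, h2 ▸ h⟩
    · rw [h1, eval]
      refine iff_of_false (hw v) ?_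
      rintro ⟨r', rfl, -⟩
      exact (not_bxy_of_ml_a h1).2 (j-1) r' rfl

theorem master_c_aux (w : List TGen) (p : Bool) (hw : ∀ v, ¬ Dp w (PP p) (.c :: v)) :
    (∀ v, ¬ Dp w (PP p) (ml .c v)) ∨
      ∃ w' p', ∀ v, Dp w (PP p) (ml .c v) ↔ Dp w' (PP p') v := by
  have trich' : ∀ v : List TGen, (∃ k r, v = .b :: .x k :: r) ∨ (∃ k r, v = .b :: .y k :: r) ∨
      (ml .c v = .c :: v ∧ (∀ k r, v ≠ .b :: .x k :: r) ∧ (∀ k r, v ≠ .b :: .y k :: r)) := by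
    intro v
    rcases trich v with h | h | ⟨h1, h2⟩
    · exact Or.inl h
    · exact Or.inr (Or.inl h)
    · exact Or.inr (Or.inr ⟨h2, (not_bxy_of_ml_a h1).1, (not_bxy_of_ml_a h1).2⟩)
  rcases slice w p with hα | ⟨hx, hy⟩ | ⟨j, w', hx, hy⟩ | ⟨j, w', hx, hy⟩
  · refine Or.inr ⟨[.b], true, fun v => ?_⟩
    rcases trich' v with ⟨k, r, rfl⟩ | ⟨k, r, rfl⟩ | ⟨h1, hbx, hby⟩
    · rw [ml_c_bx]
      exact iff_of_true (hα (k+1) r).1 (Dp_bPU_bx k r)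
    · rw [ml_c_by]
      exact iff_of_true (hα k r).2 (Dp_bPU_by k r)
    · rw [h1]
      refine iff_of_false (hw v) ?_
      rintro ⟨v', rfl, hp⟩
      rcases hp with ⟨n, r, rfl⟩ | ⟨n, r, rfl⟩
      · exact hbx n r rfl
      · exact hby n r rfl
  · refine Or.inl fun v => ?_
    rcases trich' v with ⟨k, r, rfl⟩ | ⟨k, r, rfl⟩ | ⟨h1, hbx, hby⟩
    · rw [ml_c_bx]; exact hx (k+1) r
    · rw [ml_c_by]; exact hy k r
    · rw [h1]; exact hw v
  · refine Or.inr ⟨.b :: .x (j-1) :: w', p, fun v => ?_⟩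
    have eval : ∀ u, Dp (.b :: .x (j-1) :: w') (PP p) u ↔
        ∃ r, u = .b :: .x (j-1) :: r ∧ Dp w' (PP p) r := by
      intro u
      constructor
      · rintro ⟨v', rfl, v2, rfl, h⟩; exact ⟨v2, rfl, h⟩
      · rintro ⟨r, rfl, h⟩; exact ⟨_, rfl, r, rfl, h⟩
    rcases trich' v with ⟨k, r, rfl⟩ | ⟨k, r, rfl⟩ | ⟨h1, hbx, hby⟩
    · rw [ml_c_bx, hx (k+1) r, eval]
      constructor
      · rintro ⟨h, hD⟩; exact ⟨r, by rw [show k = j - 1 by omega], hD⟩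
      · rintro ⟨r', heq, h⟩
        obtain ⟨h1, h2⟩ : k = j - 1 ∧ r = r' := by simp at heq; tauto
        exact ⟨by omega, h2 ▸ h⟩
    · rw [ml_c_by, eval]
      refine iff_of_false (hy k r) ?_
      rintro ⟨r', heq, -⟩; simp at heq
    · rw [h1, eval]
      refine iff_of_false (hw v) ?_
      rintro ⟨r', rfl, -⟩
      exact hbx (j-1) r' rfl
  · refine Or.inr ⟨.b :: .y j :: w', p, fun v => ?_⟩
    have eval : ∀ u, Dp (.b :: .y j :: w') (PP p) u ↔
        ∃ r, u = .b :: .y j :: r ∧ Dp w' (PP p) r := by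
      intro u
      constructor
      · rintro ⟨v', rfl, v2, rfl, h⟩; exact ⟨v2, rfl, h⟩
      · rintro ⟨r, rfl, h⟩; exact ⟨_, rfl, r, rfl, h⟩
    rcases trich' v with ⟨k, r, rfl⟩ | ⟨k, r, rfl⟩ | ⟨h1, hbx, hby⟩
    · rw [ml_c_bx, eval]
      refine iff_of_false (hx (k+1) r) ?_
      rintro ⟨r', heq, -⟩; simp at heq
    · rw [ml_c_by, hy k r, eval]
      constructor
      · rintro ⟨rfl, hD⟩; exact ⟨r, rfl, hD⟩
      · rintro ⟨r', heq, h⟩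
        obtain ⟨h1, h2⟩ : k = j ∧ r = r' := by simp at heq; tauto
        exact ⟨h1, h2 ▸ h⟩
    · rw [h1, eval]
      refine iff_of_false (hw v) ?_
      rintro ⟨r', rfl, -⟩
      exact hby j r' rfl

/-- the master computation: the preimage of any divisibility set under a generator is again
a divisibility set (or empty) -/
theorem master (g : TGen) (w : List TGen) (p : Bool) :
    (∀ v, ¬ Dp w (PP p) (ml g v)) ∨
      ∃ w' p', ∀ v, Dp w (PP p) (ml g v) ↔ Dp w' (PP p') v := by
  cases g with
  | a =>
      cases w with
      | nil =>
          cases p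
          · exact Or.inr ⟨[], false, fun v => by simp⟩
          · refine Or.inl fun v => ?_
            rcases trich v with ⟨k, r, rfl⟩ | ⟨k, r, rfl⟩ | ⟨h1, h2⟩ <;>
              first
                | (rw [ml_a_bx]; rintro (⟨n, r', h⟩ | ⟨n, r', h⟩) <;> simp at h)
                | (rw [ml_a_by]; rintro (⟨n, r', h⟩ | ⟨n, r', h⟩) <;> simp at h)
                | (rw [h1]; rintro (⟨n, r', h⟩ | ⟨n, r', h⟩) <;> simp at h)
      | cons h w' =>
          cases h with
          | a =>
              refine Or.inr ⟨w', p, fun v => ?_⟩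
              rcases trich v with ⟨k, r, rfl⟩ | ⟨k, r, rfl⟩ | ⟨h1, h2⟩
              · rw [ml_a_bx]; simp [step]
              · rw [ml_a_by]
                have : Dp (.a :: w') (PP p) (.b :: .y (k+1) :: r) ↔
                    Dp w' (PP p) (.b :: .y (k+1-1) :: r) := by simp [step]
                rw [this, show k+1-1 = k by omega]
              · rw [h1]
                constructor
                · rintro (⟨n, r', hh, -⟩ | ⟨n, r', hh, -⟩ | ⟨v', hv', hD⟩)
                  · simp at hh
                  · simp at hh
                  · obtain rfl : v = v' := by injection hv'
                    exact hD
                · intro hD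
                  exact Or.inr (Or.inr ⟨v, rfl, hD⟩)
          | b => exact master_a_aux _ p (fun v => by rintro ⟨v', h, -⟩; cases h)
          | c => exact master_a_aux _ p (by rintro v (⟨n, r', h, -⟩ | ⟨n, r', h, -⟩ | ⟨v', h, -⟩) <;> cases h)
          | x n => exact master_a_aux _ p (fun v => by rintro ⟨v', h, -⟩; cases h)
          | y n => exact master_a_aux _ p (fun v => by rintro ⟨v', h, -⟩; cases h)
  | c =>
      cases w with
      | nil =>
          cases p
          · exact Or.inr ⟨[], false, fun v => by simp⟩
          · refine Or.inl fun v => ?_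
            rcases trich v with ⟨k, r, rfl⟩ | ⟨k, r, rfl⟩ | ⟨h1, h2⟩ <;>
              first
                | (rw [ml_c_bx]; rintro (⟨n, r', h⟩ | ⟨n, r', h⟩) <;> simp at h)
                | (rw [ml_c_by]; rintro (⟨n, r', h⟩ | ⟨n, r', h⟩) <;> simp at h)
                | (rw [h2]; rintro (⟨n, r', h⟩ | ⟨n, r', h⟩) <;> simp at h)
      | cons h w' =>
          cases h with
          | c =>
              refine Or.inr ⟨w', p, fun v => ?_⟩
              rcases trich v with ⟨k, r, rfl⟩ | ⟨k, r, rfl⟩ | ⟨h1, h2⟩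
              · rw [ml_c_bx]
                have : Dp (.c :: w') (PP p) (.b :: .x (k+1) :: r) ↔
                    Dp w' (PP p) (.b :: .x (k+1-1) :: r) := by simp [step]
                rw [this, show k+1-1 = k by omega]
              · rw [ml_c_by]; simp [step]
              · rw [h2]
                constructor
                · rintro (⟨n, r', hh, -⟩ | ⟨n, r', hh, -⟩ | ⟨v', hv', hD⟩)
                  · simp at hh
                  · simp at hh
                  · obtain rfl : v = v' := by injection hv'
                    exact hD
                · intro hD
                  exact Or.inr (Or.inr ⟨v, rfl, hD⟩)
          | b => exact master_c_aux _ p (fun v => by rintro ⟨v', h, -⟩; cases h)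
          | a => exact master_c_aux _ p (by rintro v (⟨n, r', h, -⟩ | ⟨n, r', h, -⟩ | ⟨v', h, -⟩) <;> cases h)
          | x n => exact master_c_aux _ p (fun v => by rintro ⟨v', h, -⟩; cases h)
          | y n => exact master_c_aux _ p (fun v => by rintro ⟨v', h, -⟩; cases h)
  | b =>
      cases w with
      | nil =>
          cases p
          · exact Or.inr ⟨[], false, fun v => by simp⟩
          · refine Or.inl fun v => ?_
            rw [ml_b]
            rintro (⟨n, r', h⟩ | ⟨n, r', h⟩) <;> cases h
      | cons h w' =>
          cases h with
          | b =>
              refine Or.inr ⟨w', p, fun v => ?_⟩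
              rw [ml_b]; simp [step]
          | a =>
              have key : ∀ v, Dp (.a :: w') (PP p) (.b :: v) ↔
                  ((∃ k r, v = .x k :: r ∧ Dp w' (PP p) (.b :: .x k :: r)) ∨
                   (∃ k r, v = .y k :: r ∧ Dp w' (PP p) (.b :: .y (k-1) :: r))) := by
                intro v
                constructor
                · rintro (⟨k, r, hh, hD⟩ | ⟨k, r, hh, hD⟩ | ⟨v', hh, -⟩)
                  · obtain ⟨h1, h2⟩ : v = TGen.x k :: r ∧ True := by
                      simp at hh; tauto
                    exact Or.inl ⟨k, r, h1, hD⟩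
                  · obtain h1 : v = TGen.y k :: r := by simp at hh; tauto
                    exact Or.inr ⟨k, r, h1, hD⟩
                  · cases hh
                · rintro (⟨k, r, rfl, hD⟩ | ⟨k, r, rfl, hD⟩)
                  · exact Or.inl ⟨k, r, rfl, hD⟩
                  · exact Or.inr (Or.inl ⟨k, r, rfl, hD⟩)
              rcases slice w' p with hα | ⟨hx, hy⟩ | ⟨j, w'', hx, hy⟩ | ⟨j, w'', hx, hy⟩
              · refine Or.inr ⟨[], true, fun v => ?_⟩
                rw [ml_b, key v]
                constructor
                · rintro (⟨k, r, rfl, -⟩ | ⟨k, r, rfl, -⟩)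
                  · exact Or.inl ⟨k, r, rfl⟩
                  · exact Or.inr ⟨k, r, rfl⟩
                · rintro (⟨k, r, rfl⟩ | ⟨k, r, rfl⟩)
                  · exact Or.inl ⟨k, r, rfl, (hα k r).1⟩
                  · exact Or.inr ⟨k, r, rfl, (hα (k-1) r).2⟩
              · refine Or.inl fun v => ?_
                rw [ml_b, key v]
                rintro (⟨k, r, rfl, hD⟩ | ⟨k, r, rfl, hD⟩)
                · exact hx k r hD
                · exact hy (k-1) r hD
              · refine Or.inr ⟨.x j :: w'', p, fun v => ?_⟩
                rw [ml_b, key v]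
                constructor
                · rintro (⟨k, r, rfl, hD⟩ | ⟨k, r, rfl, hD⟩)
                  · obtain ⟨rfl, hD'⟩ := (hx k r).1 hD
                    exact ⟨r, rfl, hD'⟩
                  · exact absurd hD (hy (k-1) r)
                · rintro ⟨r, rfl, hD⟩
                  exact Or.inl ⟨j, r, rfl, (hx j r).2 ⟨rfl, hD⟩⟩
              · refine Or.inr ⟨.y (j+1) :: w'', p, fun v => ?_⟩
                rw [ml_b, key v]
                constructor
                · rintro (⟨k, r, rfl, hD⟩ | ⟨k, r, rfl, hD⟩)
                  · exact absurd hD (hx k r)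
                  · obtain ⟨hk, hD'⟩ := (hy (k-1) r).1 hD
                    exact ⟨r, by rw [show k = j+1 by omega], hD'⟩
                · rintro ⟨r, rfl, hD⟩
                  exact Or.inr ⟨j+1, r, rfl, (hy (j+1-1) r).2 ⟨by omega, hD⟩⟩
          | c =>
              have key : ∀ v, Dp (.c :: w') (PP p) (.b :: v) ↔
                  ((∃ k r, v = .x k :: r ∧ Dp w' (PP p) (.b :: .x (k-1) :: r)) ∨
                   (∃ k r, v = .y k :: r ∧ Dp w' (PP p) (.b :: .y k :: r))) := by
                intro v
                constructor
                · rintro (⟨k, r, hh, hD⟩ | ⟨k, r, hh, hD⟩ | ⟨v', hh, -⟩)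
                  · obtain h1 : v = TGen.x k :: r := by simp at hh; tauto
                    exact Or.inl ⟨k, r, h1, hD⟩
                  · obtain h1 : v = TGen.y k :: r := by simp at hh; tauto
                    exact Or.inr ⟨k, r, h1, hD⟩
                  · cases hh
                · rintro (⟨k, r, rfl, hD⟩ | ⟨k, r, rfl, hD⟩)
                  · exact Or.inl ⟨k, r, rfl, hD⟩
                  · exact Or.inr (Or.inl ⟨k, r, rfl, hD⟩)
              rcases slice w' p with hα | ⟨hx, hy⟩ | ⟨j, w'', hx, hy⟩ | ⟨j, w'', hx, hy⟩
              · refine Or.inr ⟨[], true, fun v => ?_⟩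
                rw [ml_b, key v]
                constructor
                · rintro (⟨k, r, rfl, -⟩ | ⟨k, r, rfl, -⟩)
                  · exact Or.inl ⟨k, r, rfl⟩
                  · exact Or.inr ⟨k, r, rfl⟩
                · rintro (⟨k, r, rfl⟩ | ⟨k, r, rfl⟩)
                  · exact Or.inl ⟨k, r, rfl, (hα (k-1) r).1⟩
                  · exact Or.inr ⟨k, r, rfl, (hα k r).2⟩
              · refine Or.inl fun v => ?_
                rw [ml_b, key v]
                rintro (⟨k, r, rfl, hD⟩ | ⟨k, r, rfl, hD⟩)
                · exact hx (k-1) r hD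
                · exact hy k r hD
              · refine Or.inr ⟨.x (j+1) :: w'', p, fun v => ?_⟩
                rw [ml_b, key v]
                constructor
                · rintro (⟨k, r, rfl, hD⟩ | ⟨k, r, rfl, hD⟩)
                  · obtain ⟨hk, hD'⟩ := (hx (k-1) r).1 hD
                    exact ⟨r, by rw [show k = j+1 by omega], hD'⟩
                  · exact absurd hD (hy k r)
                · rintro ⟨r, rfl, hD⟩
                  exact Or.inl ⟨j+1, r, rfl, (hx (j+1-1) r).2 ⟨by omega, hD⟩⟩
              · refine Or.inr ⟨.y j :: w'', p, fun v => ?_⟩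
                rw [ml_b, key v]
                constructor
                · rintro (⟨k, r, rfl, hD⟩ | ⟨k, r, rfl, hD⟩)
                  · exact absurd hD (hx (k-1) r)
                  · obtain ⟨rfl, hD'⟩ := (hy k r).1 hD
                    exact ⟨r, rfl, hD'⟩
                · rintro ⟨r, rfl, hD⟩
                  exact Or.inr ⟨j, r, rfl, (hy j r).2 ⟨rfl, hD⟩⟩
          | x n =>
              refine Or.inl fun v => ?_
              rw [ml_b]
              rintro ⟨v', h, -⟩; cases h
          | y n =>
              refine Or.inl fun v => ?_
              rw [ml_b]
              rintro ⟨v', h, -⟩; cases h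
  | x n =>
      cases w with
      | nil => exact Or.inr ⟨[], false, fun v => by cases p <;> simp [PP_true]⟩
      | cons h w' =>
          cases h with
          | x m =>
              by_cases hmn : m = n
              · subst hmn
                refine Or.inr ⟨w', p, fun v => ?_⟩
                rw [ml_x]; simp [step]
              · refine Or.inl fun v => ?_
                rw [ml_x]
                rintro ⟨v', h, -⟩
                simp at h
                exact hmn h.1.symm
          | a => exact Or.inl fun v => by rw [ml_x]; rintro (⟨k, r, h, -⟩ | ⟨k, r, h, -⟩ | ⟨v', h, -⟩) <;> cases h
          | b => exact Or.inl fun v => by rw [ml_x]; rintro ⟨v', h, -⟩; cases h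
          | c => exact Or.inl fun v => by rw [ml_x]; rintro (⟨k, r, h, -⟩ | ⟨k, r, h, -⟩ | ⟨v', h, -⟩) <;> cases h
          | y m => exact Or.inl fun v => by rw [ml_x]; rintro ⟨v', h, -⟩; cases h
  | y n =>
      cases w with
      | nil => exact Or.inr ⟨[], false, fun v => by cases p <;> simp [PP_true]⟩
      | cons h w' =>
          cases h with
          | y m =>
              by_cases hmn : m = n
              · subst hmn
                refine Or.inr ⟨w', p, fun v => ?_⟩
                rw [ml_y]; simp [step]
              · refine Or.inl fun v => ?_
                rw [ml_y]
                rintro ⟨v', h, -⟩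
                simp at h
                exact hmn h.1.symm
          | a => exact Or.inl fun v => by rw [ml_y]; rintro (⟨k, r, h, -⟩ | ⟨k, r, h, -⟩ | ⟨v', h, -⟩) <;> cases h
          | b => exact Or.inl fun v => by rw [ml_y]; rintro ⟨v', h, -⟩; cases h
          | c => exact Or.inl fun v => by rw [ml_y]; rintro (⟨k, r, h, -⟩ | ⟨k, r, h, -⟩ | ⟨v', h, -⟩) <;> cases h
          | x m => exact Or.inl fun v => by rw [ml_y]; rintro ⟨v', h, -⟩; cases h

/-- left multiplication of a word on a normal word -/
def lmul (w V : List TGen) : List TGen := w.foldr ml V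

@[simp] lemma lmul_nil (V : List TGen) : lmul [] V = V := rfl
@[simp] lemma lmul_cons (g : TGen) (w V : List TGen) : lmul (g :: w) V = ml g (lmul w V) := rfl

lemma lmul_eq_nf {V : List TGen} (hV : nf V = V) (w : List TGen) : lmul w V = nf (w ++ V) := by
  rw [nf_append, hV]; rfl

lemma lmul_norm {V : List TGen} (hV : nf V = V) (w : List TGen) :
    nf (lmul w V) = lmul w V := by
  rw [lmul_eq_nf hV, nf_idem]

lemma ml_norm {v : List TGen} (hv : nf v = v) (g : TGen) : nf (ml g v) = ml g v := by
  have : ml g v = nf (g :: v) := by rw [nf_cons, hv]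
  rw [this, nf_idem]

/-- the key correctness result: `Dp w P v` holds iff `v` is obtained by multiplying `w`
onto a normal word satisfying `P`. -/
theorem divIff (w : List TGen) (P : List TGen → Prop) :
    ∀ v, nf v = v → (Dp w P v ↔ ∃ V, nf V = V ∧ P V ∧ lmul w V = v) := by
  induction w with
  | nil =>
      intro v hv
      simp only [Dp_nil, lmul_nil]
      constructor
      · exact fun h => ⟨v, hv, h, rfl⟩
      · rintro ⟨V, -, hP, rfl⟩; exact hP
  | cons g w ih =>
      intro v hv
      rw [Dp_cons]
      cases g with
      | b =>
          constructor
          · rintro ⟨v', rfl, hD⟩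
            obtain ⟨hn, -⟩ := norm_cons hv
            obtain ⟨V, h1, h2, h3⟩ := (ih v' hn).1 hD
            exact ⟨V, h1, h2, by rw [lmul_cons, h3, ml_b]⟩
          · rintro ⟨V, h1, h2, h3⟩
            rw [lmul_cons, ml_b] at h3
            refine ⟨lmul w V, h3.symm, ?_⟩
            exact (ih (lmul w V) (lmul_norm h1 w)).2 ⟨V, h1, h2, rfl⟩
      | x n =>
          constructor
          · rintro ⟨v', rfl, hD⟩
            obtain ⟨hn, -⟩ := norm_cons hv
            obtain ⟨V, h1, h2, h3⟩ := (ih v' hn).1 hD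
            exact ⟨V, h1, h2, by rw [lmul_cons, h3, ml_x]⟩
          · rintro ⟨V, h1, h2, h3⟩
            rw [lmul_cons, ml_x] at h3
            refine ⟨lmul w V, h3.symm, ?_⟩
            exact (ih (lmul w V) (lmul_norm h1 w)).2 ⟨V, h1, h2, rfl⟩
      | y n =>
          constructor
          · rintro ⟨v', rfl, hD⟩
            obtain ⟨hn, -⟩ := norm_cons hv
            obtain ⟨V, h1, h2, h3⟩ := (ih v' hn).1 hD
            exact ⟨V, h1, h2, by rw [lmul_cons, h3, ml_y]⟩
          · rintro ⟨V, h1, h2, h3⟩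
            rw [lmul_cons, ml_y] at h3
            refine ⟨lmul w V, h3.symm, ?_⟩
            exact (ih (lmul w V) (lmul_norm h1 w)).2 ⟨V, h1, h2, rfl⟩
      | a =>
          constructor
          · rintro (⟨k, r, rfl, hD⟩ | ⟨k, r, rfl, hD⟩ | ⟨v', rfl, hD⟩)
            · obtain ⟨V, h1, h2, h3⟩ := (ih _ hv).1 hD
              exact ⟨V, h1, h2, by rw [lmul_cons, h3, ml_a_bx]⟩
            · have hr : nf r = r := (norm_cons (norm_cons hv).1).1
              have hnorm : nf (.b :: .y (k-1) :: r) = .b :: .y (k-1) :: r := by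
                rw [nf_cons, nf_cons, hr, ml_y, ml_b]
              obtain ⟨V, h1, h2, h3⟩ := (ih _ hnorm).1 hD
              refine ⟨V, h1, h2, ?_⟩
              rw [lmul_cons, h3, ml_a_by, show k - 1 + 1 = k by omega]
            · obtain ⟨hn, hml⟩ := norm_cons hv
              obtain ⟨V, h1, h2, h3⟩ := (ih v' hn).1 hD
              exact ⟨V, h1, h2, by rw [lmul_cons, h3, hml]⟩
          · rintro ⟨V, h1, h2, h3⟩
            have hW : nf (lmul w V) = lmul w V := lmul_norm h1 w
            have hD : Dp w P (lmul w V) := (ih _ hW).2 ⟨V, h1, h2, rfl⟩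
            rw [lmul_cons] at h3
            rcases trich (lmul w V) with ⟨k, r, hk⟩ | ⟨k, r, hk⟩ | ⟨e1, e2⟩
            · rw [hk, ml_a_bx] at h3
              subst h3
              exact Or.inl ⟨k, r, rfl, hk ▸ hD⟩
            · rw [hk, ml_a_by] at h3
              subst h3
              refine Or.inr (Or.inl ⟨k+1, r, rfl, ?_⟩)
              rw [show k + 1 - 1 = k by omega]
              exact hk ▸ hD
            · rw [e1] at h3
              subst h3
              exact Or.inr (Or.inr ⟨lmul w V, rfl, hD⟩)
      | c =>
          constructor
          · rintro (⟨k, r, rfl, hD⟩ | ⟨k, r, rfl, hD⟩ | ⟨v', rfl, hD⟩)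
            · have hr : nf r = r := (norm_cons (norm_cons hv).1).1
              have hnorm : nf (.b :: .x (k-1) :: r) = .b :: .x (k-1) :: r := by
                rw [nf_cons, nf_cons, hr, ml_x, ml_b]
              obtain ⟨V, h1, h2, h3⟩ := (ih _ hnorm).1 hD
              refine ⟨V, h1, h2, ?_⟩
              rw [lmul_cons, h3, ml_c_bx, show k - 1 + 1 = k by omega]
            · obtain ⟨V, h1, h2, h3⟩ := (ih _ hv).1 hD
              exact ⟨V, h1, h2, by rw [lmul_cons, h3, ml_c_by]⟩
            · obtain ⟨hn, hml⟩ := norm_cons hv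
              obtain ⟨V, h1, h2, h3⟩ := (ih v' hn).1 hD
              have : ml .c v' = .c :: v' := by
                rcases trich v' with ⟨k, r, hk⟩ | ⟨k, r, hk⟩ | ⟨e1, e2⟩
                · exfalso; rw [hk, ml_c_bx] at hml; simp at hml
                · exfalso; rw [hk, ml_c_by] at hml; simp at hml
                · exact e2
              exact ⟨V, h1, h2, by rw [lmul_cons, h3, this]⟩
          · rintro ⟨V, h1, h2, h3⟩
            have hW : nf (lmul w V) = lmul w V := lmul_norm h1 w
            have hD : Dp w P (lmul w V) := (ih _ hW).2 ⟨V, h1, h2, rfl⟩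
            rw [lmul_cons] at h3
            rcases trich (lmul w V) with ⟨k, r, hk⟩ | ⟨k, r, hk⟩ | ⟨e1, e2⟩
            · rw [hk, ml_c_bx] at h3
              subst h3
              refine Or.inl ⟨k+1, r, rfl, ?_⟩
              rw [show k + 1 - 1 = k by omega]
              exact hk ▸ hD
            · rw [hk, ml_c_by] at h3
              subst h3
              exact Or.inr (Or.inl ⟨k, r, rfl, hk ▸ hD⟩)
            · rw [e2] at h3
              subst h3
              exact Or.inr (Or.inr ⟨lmul w V, rfl, hD⟩)

/-- the family of candidate constructible ideals, described by words -/
def Lev (w : List TGen) (p : Bool) : Set T :=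
  {m | ∃ V, nf V = V ∧ PP p V ∧ m = mkw (w ++ V)}

lemma mem_Lev {w : List TGen} {p : Bool} {v : List TGen} (hv : nf v = v) :
    mkw v ∈ Lev w p ↔ Dp w (PP p) v := by
  rw [divIff w (PP p) v hv]
  constructor
  · rintro ⟨V, h1, h2, h3⟩
    refine ⟨V, h1, h2, ?_⟩
    have := mkw_eq_iff.1 h3
    rw [hv, nf_append, h1] at this
    exact this.symm
  · rintro ⟨V, h1, h2, h3⟩
    refine ⟨V, h1, h2, ?_⟩
    rw [mkw_eq_iff, hv, nf_append, h1]
    exact h3.symm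

/-- the property of being in the candidate family -/
def InF (X : Set T) : Prop := X = ∅ ∨ ∃ w p, X = Lev w p

lemma univ_eq_Lev : (Set.univ : Set T) = Lev [] false := by
  ext m
  simp only [Set.mem_univ, true_iff]
  obtain ⟨v, hv, rfl⟩ := mkw_surj m
  exact ⟨v, hv, trivial, rfl⟩

lemma image_Lev (s : List TGen) (w : List TGen) (p : Bool) :
    (mkw s * ·) '' Lev w p = Lev (s ++ w) p := by
  ext m
  constructor
  · rintro ⟨m', ⟨V, h1, h2, rfl⟩, rfl⟩
    refine ⟨V, h1, h2, ?_⟩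
    show mkw s * mkw (w ++ V) = _
    rw [← mkw_append, List.append_assoc]
  · rintro ⟨V, h1, h2, rfl⟩
    refine ⟨mkw (w ++ V), ⟨V, h1, h2, rfl⟩, ?_⟩
    show mkw s * mkw (w ++ V) = _
    rw [← mkw_append, List.append_assoc]

lemma image_InF (t : T) {X : Set T} (hX : InF X) : InF ((t * ·) '' X) := by
  obtain ⟨s, -, rfl⟩ := mkw_surj t
  rcases hX with rfl | ⟨w, p, rfl⟩
  · left; simp
  · right; exact ⟨s ++ w, p, image_Lev s w p⟩

lemma gen_mul_mem (g : TGen) {v : List TGen} (hv : nf v = v) {w : List TGen} {p : Bool} :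
    gen g * mkw v ∈ Lev w p ↔ Dp w (PP p) (ml g v) := by
  rw [gen_mul_mkw, ← mem_Lev (ml_norm hv g)]

lemma preimage_gen_InF (g : TGen) {X : Set T} (hX : InF X) : InF {m | gen g * m ∈ X} := by
  rcases hX with rfl | ⟨w, p, rfl⟩
  · left; ext m; simp
  · rcases master g w p with hm | ⟨w', p', hm⟩
    · left
      ext m
      obtain ⟨v, hv, rfl⟩ := mkw_surj m
      simp only [Set.mem_setOf_eq, Set.mem_empty_iff_false, iff_false]
      rw [gen_mul_mem g hv]
      exact hm v
    · right
      refine ⟨w', p', ?_⟩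
      ext m
      obtain ⟨v, hv, rfl⟩ := mkw_surj m
      simp only [Set.mem_setOf_eq]
      rw [gen_mul_mem g hv, hm v, mem_Lev hv]

lemma preimage_InF (t : T) {X : Set T} (hX : InF X) : InF {m | t * m ∈ X} := by
  obtain ⟨s, -, rfl⟩ := mkw_surj t
  revert hX
  induction s generalizing X with
  | nil =>
      intro hX
      have h : {m | mkw [] * m ∈ X} = X := by ext m; simp
      rw [h]; exact hX
  | cons g s ih =>
      intro hX
      have h : {m | mkw (g :: s) * m ∈ X} = {m | mkw s * m ∈ {m' | gen g * m' ∈ X}} := by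
        ext m
        simp only [Set.mem_setOf_eq, mkw_cons, mul_assoc]
      rw [h]
      exact ih (preimage_gen_InF g hX)


lemma toInF {X : Set T} (h : IsConstructible T X) : InF X := by
  induction h with
  | univ => exact Or.inr ⟨[], false, univ_eq_Lev⟩
  | mul t _ ih => exact image_InF t ih
  | preimage t _ ih => exact preimage_InF t ih

lemma Lev_false_eq (w : List TGen) : Lev w false = rIdeal (mkw w) := by
  ext m
  constructor
  · rintro ⟨V, h1, -, rfl⟩
    exact ⟨mkw V, mkw_append w V⟩
  · rintro ⟨u, rfl⟩
    obtain ⟨V, hV, rfl⟩ := mkw_surj u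
    exact ⟨V, hV, trivial, (mkw_append w V).symm⟩

lemma Lev_true_eq (w : List TGen) :
    Lev w true = (⋃ n : ℤ, rIdeal (mkw w * gen (.x n))) ∪ ⋃ n : ℤ, rIdeal (mkw w * gen (.y n)) := by
  ext m
  constructor
  · rintro ⟨V, h1, h2, rfl⟩
    rcases h2 with ⟨n, r, rfl⟩ | ⟨n, r, rfl⟩
    · left
      refine Set.mem_iUnion.2 ⟨n, mkw r, ?_⟩
      rw [mkw_append, mkw_cons, mul_assoc]
    · right
      refine Set.mem_iUnion.2 ⟨n, mkw r, ?_⟩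
      rw [mkw_append, mkw_cons, mul_assoc]
  · intro hm
    rcases hm with hm | hm <;> obtain ⟨n, u, hu⟩ := Set.mem_iUnion.1 hm
    · obtain ⟨r, hr, rfl⟩ := mkw_surj u
      refine ⟨.x n :: r, by rw [nf_cons, ml_x, hr], Or.inl ⟨n, r, rfl⟩, ?_⟩
      rw [hu, mkw_append, mkw_cons, mul_assoc]
    · obtain ⟨r, hr, rfl⟩ := mkw_surj u
      refine ⟨.y n :: r, by rw [nf_cons, ml_y, hr], Or.inr ⟨n, r, rfl⟩, ?_⟩
      rw [hu, mkw_append, mkw_cons, mul_assoc]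

lemma rIdeal_eq_image (t : T) : rIdeal t = (t * ·) '' Set.univ := by
  ext m
  simp only [rIdeal, Set.image_univ, Set.mem_setOf_eq, Set.mem_range]
  exact ⟨fun ⟨u, h⟩ => ⟨u, h.symm⟩, fun ⟨u, h⟩ => ⟨u, h.symm⟩⟩

lemma rIdeal_constructible (t : T) : IsConstructible T (rIdeal t) := by
  rw [rIdeal_eq_image]
  exact .mul t .univ

lemma empty_constructible : IsConstructible T (∅ : Set T) := by
  have h1 : IsConstructible T {m | gen (.x 0) * m ∈ rIdeal (gen .b)} :=
    .preimage _ (rIdeal_constructible (gen .b))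
  have h2 : {m | gen (.x 0) * m ∈ rIdeal (gen .b)} = ∅ := by
    ext m
    simp only [Set.mem_setOf_eq, Set.mem_empty_iff_false, iff_false]
    obtain ⟨v, hv, rfl⟩ := mkw_surj m
    have : rIdeal (gen .b) = Lev [.b] false := (Lev_false_eq [.b]).symm
    rw [this, gen_mul_mem (.x 0) hv, ml_x]
    rintro ⟨v', h, -⟩
    cases h
  rwa [h2] at h1

lemma image_rIdeal (t s : T) : (t * ·) '' rIdeal s = rIdeal (t * s) := by
  ext m
  constructor
  · rintro ⟨m', ⟨u, rfl⟩, rfl⟩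
    exact ⟨u, (mul_assoc t s u).symm⟩
  · rintro ⟨u, rfl⟩
    exact ⟨s * u, ⟨u, rfl⟩, (mul_assoc t s u).symm⟩

lemma J_constructible (t : T) :
    IsConstructible T
      ((⋃ n : ℤ, rIdeal (t * gen (.x n))) ∪ ⋃ n : ℤ, rIdeal (t * gen (.y n))) := by
  have c0 : IsConstructible T (Lev [.b] false) := by
    rw [Lev_false_eq]
    exact rIdeal_constructible _
  have c1 : IsConstructible T {m | gen .a * m ∈ Lev [.b] false} := .preimage _ c0
  have e1 : {m | gen .a * m ∈ Lev [.b] false} = Lev [.b] true := by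
    ext m
    obtain ⟨v, hv, rfl⟩ := mkw_surj m
    simp only [Set.mem_setOf_eq]
    rw [gen_mul_mem .a hv, mem_Lev hv]
    rcases trich v with ⟨k, r, rfl⟩ | ⟨k, r, rfl⟩ | ⟨h1, h2⟩
    · rw [ml_a_bx]
      exact iff_of_true ⟨_, rfl, trivial⟩ (Dp_bPU_bx k r)
    · rw [ml_a_by]
      exact iff_of_true ⟨_, rfl, trivial⟩ (Dp_bPU_by k r)
    · rw [h1]
      refine iff_of_false ?_ (not_Dp_bPU_of_ml_a h1)
      rintro ⟨v', h, -⟩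
      cases h
  have c2 : IsConstructible T {m | gen .b * m ∈ Lev [.b] true} := .preimage _ (e1 ▸ c1)
  have e2 : {m | gen .b * m ∈ Lev [.b] true} = Lev [] true := by
    ext m
    obtain ⟨v, hv, rfl⟩ := mkw_surj m
    simp only [Set.mem_setOf_eq]
    rw [gen_mul_mem .b hv, mem_Lev hv, ml_b, Dp_nil]
    constructor
    · rintro ⟨v', h, hp⟩
      obtain rfl : v = v' := by injection h
      exact hp
    · intro hp
      exact ⟨v, rfl, hp⟩
  have c3 : IsConstructible T ((t * ·) '' Lev [] true) := .mul t (e2 ▸ c2)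
  have e3 : (t * ·) '' Lev [] true
      = (⋃ n : ℤ, rIdeal (t * gen (.x n))) ∪ ⋃ n : ℤ, rIdeal (t * gen (.y n)) := by
    rw [Lev_true_eq []]
    rw [Set.image_union]
    congr 1 <;>
      · rw [Set.image_iUnion]
        refine Set.iUnion_congr fun n => ?_
        rw [image_rIdeal, mkw_nil, one_mul]
  rwa [e3] at c3

end TProof

/-- The constructible right ideals of `T` are exactly `∅`, the principal right ideals `tT`,
and the ideals `⋃ₙ t xₙ T ∪ ⋃ₙ t yₙ T` for `t ∈ T`. -/
theorem T_constructible_ideals (X : Set T) :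
    IsConstructible T X ↔
      X = ∅ ∨ (∃ t : T, X = rIdeal t) ∨
        ∃ t : T, X = (⋃ n : ℤ, rIdeal (t * gen (.x n))) ∪ ⋃ n : ℤ, rIdeal (t * gen (.y n)) := by

  constructor
  · intro h
    rcases TProof.toInF h with rfl | ⟨w, p, rfl⟩
    · exact Or.inl rfl
    · cases p
      · exact Or.inr (Or.inl ⟨TProof.mkw w, TProof.Lev_false_eq w⟩)
      · exact Or.inr (Or.inr ⟨TProof.mkw w, TProof.Lev_true_eq w⟩)
  · rintro (rfl | ⟨t, rfl⟩ | ⟨t, rfl⟩)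
    · exact TProof.empty_constructible
    · exact TProof.rIdeal_constructible t
    · exact TProof.J_constructible t
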